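/- Let (X,d) and (Y,∂) be uniformly locally finite metric spaces, f : X → Y a coarse map, and S : ℓ²(X,H) → ℓ²(Y,H) an isometry such that there exists R ≥ 0 with ∂(y, f(x)) ≤ R whenever 𝟙_y S 𝟙_x ≠ 0. If f is coarse with control function: for all R₀ there is R₁ with d(x,x') ≤ R₀ implying ∂(f(x),f(x')) ≤ R₁, then for every finite-propagation operator T on ℓ²(X,H) with prop(T) ≤ R₀, the operator S T S* on ℓ²(Y,H) has propagation at most R₁ + 2R. -/

import Mathlib

noncomputable section
open scoped Classical

def UniformlyLocallyFinite (X : Type*) [MetricSpace X] : Prop :=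
  ∀ R : ℝ, ∃ N : ℕ, ∀ x : X,
    (Metric.closedBall x R).Finite ∧ (Metric.closedBall x R).ncard ≤ N

def IsCoarse {X Y : Type*} [MetricSpace X] [MetricSpace Y] (f : X → Y) : Prop :=
  ∀ R : ℝ, ∃ S : ℝ, ∀ x x' : X, dist x x' ≤ R → dist (f x) (f x') ≤ S

def Close {X Y : Type*} [MetricSpace Y] (f g : X → Y) : Prop :=
  ∃ C : ℝ, ∀ x : X, dist (f x) (g x) ≤ C

def UniformlyFiniteToOne {X Y : Type*} (f : X → Y) : Prop :=
  ∃ N : ℕ, ∀ y : Y, (f ⁻¹' {y}).Finite ∧ (f ⁻¹' {y}).ncard ≤ N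

variable {H : Type*} [NormedAddCommGroup H] [InnerProductSpace ℂ H] [CompleteSpace H]

/-- `ℓ²(X, H)`, the Hilbert space of square-summable `H`-valued functions. -/
abbrev L2H (X : Type*) (H : Type*) [NormedAddCommGroup H]
    [InnerProductSpace ℂ H] := lp (fun _ : X => H) 2

/-- `𝟙_y S 𝟙_x ≠ 0` for an operator `S : ℓ²(X,H) → ℓ²(Y,H)`. -/
def blkNe {X Y : Type*} (S : L2H X H →L[ℂ] L2H Y H) (y : Y) (x : X) : Prop :=
  ∃ v : H, (S (lp.single 2 x v) : ∀ _ : Y, H) y ≠ 0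

/-- The adjoint direction: if `S* (single y v)` is nonzero at `x`, then `blkNe S y x`. -/
lemma adj_blk {X Y : Type*} (S : L2H X H →L[ℂ] L2H Y H) (y : Y) (x : X) (v : H)
    (h : ((ContinuousLinearMap.adjoint S) (lp.single 2 y v) : ∀ _ : X, H) x ≠ 0) :
    blkNe S y x := by
  set u := (ContinuousLinearMap.adjoint S) (lp.single 2 y v)
  by_contra hc
  apply h
  have h1 : (inner ℂ (lp.single 2 x (u x)) u : ℂ) = inner ℂ (u x) (u x) :=
    lp.inner_single_left _ _ _
  have h2 : (inner ℂ (S (lp.single 2 x (u x))) (lp.single 2 y v) : ℂ)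
      = inner ℂ (lp.single 2 x (u x)) u := by
    simpa [u] using (ContinuousLinearMap.adjoint_inner_right S (lp.single 2 x (u x)) (lp.single 2 y v)).symm
  have h3 : (inner ℂ (S (lp.single 2 x (u x))) (lp.single 2 y v) : ℂ)
      = inner ℂ ((S (lp.single 2 x (u x)) : ∀ _ : Y, H) y) v := lp.inner_single_right _ _ _
  have h4 : (S (lp.single 2 x (u x)) : ∀ _ : Y, H) y = 0 := by
    by_contra h4
    exact hc ⟨u x, h4⟩
  have : (inner ℂ (u x) (u x) : ℂ) = 0 := by rw [← h1, ← h2, h3, h4, inner_zero_left]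
  exact inner_self_eq_zero.mp this

theorem stmt15 {X Y : Type*} [MetricSpace X] [MetricSpace Y]
    (hX : UniformlyLocallyFinite X) (hY : UniformlyLocallyFinite Y)
    (f : X → Y) (hf : IsCoarse f)
    (S : L2H X H →L[ℂ] L2H Y H) (hS : Isometry S)
    (R : ℝ) (hR : 0 ≤ R)
    (hcover : ∀ (x : X) (y : Y), blkNe S y x → dist y (f x) ≤ R)
    (R₀ R₁ : ℝ) (hctrl : ∀ x x' : X, dist x x' ≤ R₀ → dist (f x) (f x') ≤ R₁)
    (T : L2H X H →L[ℂ] L2H X H)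
    (hT : ∀ x x' : X, blkNe T x' x → dist x x' ≤ R₀) :
    ∀ y y' : Y,
      blkNe (S.comp (T.comp (ContinuousLinearMap.adjoint S))) y' y →
        dist y y' ≤ R₁ + 2 * R := by
  intro y y' hblk
  by_contra hdist
  push_neg at hdist
  obtain ⟨v, hv⟩ := hblk
  simp only [ContinuousLinearMap.comp_apply] at hv
  set w := (S (T ((ContinuousLinearMap.adjoint S) (lp.single 2 y v))) : ∀ _ : Y, H) y' with hw
  set u : L2H X H := (ContinuousLinearMap.adjoint S) (lp.single 2 y v) with hu
  set u' : L2H X H := (ContinuousLinearMap.adjoint S) (lp.single 2 y' w) with hu'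
  -- inner ⟪single y' w, S T u⟫ = ⟪w, w⟫ ≠ 0
  have hinner1 : (inner ℂ (lp.single 2 y' w) (S (T u)) : ℂ) = inner ℂ w w :=
    lp.inner_single_left _ _ _
  have hinner2 : (inner ℂ (lp.single 2 y' w) (S (T u)) : ℂ) = inner ℂ u' (T u) := by
    rw [hu', ContinuousLinearMap.adjoint_inner_left]
  -- Now show ⟪u', T u⟫ = 0
  have key : (inner ℂ u' (T u) : ℂ) = 0 := by
    have hsum : HasSum (fun x : X => lp.single 2 x (u x)) u :=
      lp.hasSum_single ENNReal.ofNat_ne_top u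
    have hsum2 : HasSum (fun x : X => (inner ℂ u' (T (lp.single 2 x (u x))) : ℂ))
        (inner ℂ u' (T u)) := by
      have := ((hsum.mapL T).mapL (innerSL ℂ u'))
      simpa using this
    have hzero : ∀ x : X, (inner ℂ u' (T (lp.single 2 x (u x))) : ℂ) = 0 := by
      intro x
      by_cases hux : u x = 0
      · have : lp.single (E := fun _ : X => H) 2 x (u x) = 0 := by
          apply lp.ext
          funext j
          rw [hux, lp.single_apply]
          simp
        simp [this]
      have hyx : dist y (f x) ≤ R := hcover x y (adj_blk S y x v hux)
      rw [lp.inner_eq_tsum]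
      have hterm : ∀ x' : X,
          (inner ℂ (u' x') ((T (lp.single 2 x (u x)) : ∀ _ : X, H) x') : ℂ) = 0 := by
        intro x'
        by_cases hTx : (T (lp.single 2 x (u x)) : ∀ _ : X, H) x' = 0
        · simp [hTx]
        by_cases hux' : u' x' = 0
        · simp [hux']
        exfalso
        have hxx : dist x x' ≤ R₀ := hT x x' ⟨u x, hTx⟩
        have hy'x : dist y' (f x') ≤ R := hcover x' y' (adj_blk S y' x' w hux')
        have : dist y y' ≤ R + R₁ + R := by
          calc dist y y' ≤ dist y (f x) + dist (f x) (f x') + dist (f x') y' :=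
                dist_triangle4 y (f x) (f x') y'
            _ ≤ R + R₁ + R := by
                gcongr
                · exact hctrl x x' hxx
                · rw [dist_comm]; exact hy'x
        linarith
      rw [tsum_congr hterm, tsum_zero]
    exact hsum2.unique (by simpa [hzero] using hasSum_zero)
  rw [← hinner2, hinner1] at key
  have : w ≠ 0 := hv
  exact this (inner_self_eq_zero.mp key)
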